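/- Let X₁,…,X_N be Banach spaces over 𝕂 = ℝ or ℂ with X_N uniformly convex. If the pair (X₁×⋯×X_{N−1}, X_N*) has the property L_{o,o} for continuous (N−1)-linear maps with values in the dual X_N*, then the pair (X₁×⋯×X_N, 𝕂) has the property L_{o,o} for N-linear forms, where an N-linear form A corresponds to the (N−1)-linear map Ã(x₁,…,x_{N−1})(x_N) = A(x₁,…,x_N). -/

import Mathlib

open scoped Topology

section aux
variable {𝕜 : Type*} [RCLike 𝕜] {Y : Type*} [NormedAddCommGroup Y] [NormedSpace 𝕜 Y]

lemma exists_unit_real_close (f : Y →L[𝕜] 𝕜) (hf : ‖f‖ = 1) {t : ℝ} (ht : t < 1) :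
    ∃ z : Y, ‖z‖ = 1 ∧ ∃ r : ℝ, t < r ∧ r ≤ 1 ∧ f z = (r : 𝕜) := by
  obtain ⟨x, hx1, hx2⟩ := f.exists_lt_apply_of_lt_opNorm (r := max t 0)
    (by rw [hf]; exact max_lt ht one_pos)
  have hx0 : x ≠ 0 := by
    rintro rfl
    simp only [map_zero, norm_zero] at hx2
    exact absurd hx2 (not_lt.2 (le_max_right _ _))
  have hxn : (0:ℝ) < ‖x‖ := norm_pos_iff.2 hx0
  set u : Y := ((‖x‖ : 𝕜))⁻¹ • x with hu
  have hnx : ‖((‖x‖ : 𝕜))⁻¹‖ = ‖x‖⁻¹ := by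
    rw [norm_inv, RCLike.norm_ofReal, abs_of_pos hxn]
  have hun : ‖u‖ = 1 := by
    rw [hu, norm_smul, hnx, inv_mul_cancel₀ hxn.ne']
  have hfu : ‖f u‖ = ‖x‖⁻¹ * ‖f x‖ := by
    rw [hu, map_smul, norm_smul, hnx]
  have hfu_gt : max t 0 < ‖f u‖ := by
    rw [hfu]
    calc max t 0 < ‖f x‖ := hx2
    _ = 1 * ‖f x‖ := (one_mul _).symm
    _ ≤ ‖x‖⁻¹ * ‖f x‖ := by
        apply mul_le_mul_of_nonneg_right _ (norm_nonneg _)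
        rw [le_inv_comm₀ one_pos hxn]
        simpa using hx1.le
  have hfu_le : ‖f u‖ ≤ 1 := by
    calc ‖f u‖ ≤ ‖f‖ * ‖u‖ := f.le_opNorm u
    _ = 1 := by rw [hf, hun, mul_one]
  have hfu0 : f u ≠ 0 := by
    intro h
    rw [h, norm_zero] at hfu_gt
    exact absurd hfu_gt (not_lt.2 (le_max_right _ _))
  set c : 𝕜 := (starRingEnd 𝕜) (f u) / (‖f u‖ : 𝕜) with hc
  have hfun0 : (‖f u‖ : 𝕜) ≠ 0 := by
    exact_mod_cast (RCLike.ofReal_ne_zero).2 (norm_ne_zero_iff.2 hfu0)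
  have hcn : ‖c‖ = 1 := by
    rw [hc, norm_div, RCLike.norm_conj, RCLike.norm_ofReal, abs_of_nonneg (norm_nonneg _),
      div_self (norm_ne_zero_iff.2 hfu0)]
  refine ⟨c • u, by rw [norm_smul, hcn, hun, mul_one], ‖f u‖,
    lt_of_le_of_lt (le_max_left _ _) hfu_gt, hfu_le, ?_⟩
  rw [map_smul, smul_eq_mul, hc, div_mul_eq_mul_div, RCLike.conj_mul]
  rw [div_eq_iff hfun0]
  ring

variable [CompleteSpace Y] [UniformConvexSpace Y]

lemma exists_norm_attain (f : Y →L[𝕜] 𝕜) (hf : ‖f‖ = 1) :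
    ∃ z : Y, ‖z‖ = 1 ∧ f z = 1 := by
  have H : ∀ k : ℕ, ∃ z : Y, ‖z‖ = 1 ∧ ∃ r : ℝ, 1 - 1/(k+1) < r ∧ r ≤ 1 ∧ f z = (r : 𝕜) := by
    intro k
    refine exists_unit_real_close f hf ?_
    have : (0:ℝ) < 1/(k+1) := by positivity
    linarith
  choose y hy r hr1 hr2 hfy using H
  have hcauchy : CauchySeq y := by
    rw [Metric.cauchySeq_iff]
    intro ε hε
    obtain ⟨δ, hδ0, hδ⟩ := exists_forall_sphere_dist_add_le_two_sub Y hε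
    obtain ⟨N, hN⟩ := exists_nat_gt (2/δ)
    have hNd : 1/((N:ℝ)+1) < δ/2 := by
      rw [div_lt_div_iff₀ (by positivity) two_pos]
      rw [div_lt_iff₀ hδ0] at hN
      nlinarith
    refine ⟨N, fun k hk l hl => ?_⟩
    have hbound : ∀ m : ℕ, N ≤ m → 1 - δ/2 < r m := by
      intro m hm
      have h1 : 1/((m:ℝ)+1) ≤ 1/((N:ℝ)+1) := by
        apply one_div_le_one_div_of_le (by positivity)
        exact_mod_cast Nat.succ_le_succ hm
      have := hr1 m
      linarith
    by_contra hcon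
    push_neg at hcon
    rw [dist_eq_norm] at hcon
    have h2 := hδ (hy k) (hy l) hcon
    have h3 : ‖y k + y l‖ ≥ r k + r l := by
      calc r k + r l ≤ |r k + r l| := le_abs_self _
      _ = ‖((r k + r l : ℝ) : 𝕜)‖ := (RCLike.norm_ofReal _).symm
      _ = ‖f (y k + y l)‖ := by rw [map_add, hfy, hfy]; push_cast; ring_nf
      _ ≤ ‖f‖ * ‖y k + y l‖ := f.le_opNorm _
      _ = ‖y k + y l‖ := by rw [hf, one_mul]
    have h4 := hbound k hk
    have h5 := hbound l hl
    linarith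
  obtain ⟨z, hz⟩ := cauchySeq_tendsto_of_complete hcauchy
  have hzn : ‖z‖ = 1 := by
    have h1 : Filter.Tendsto (fun k => ‖y k‖) Filter.atTop (𝓝 ‖z‖) :=
      (continuous_norm.tendsto z).comp hz
    have h2 : Filter.Tendsto (fun k => ‖y k‖) Filter.atTop (𝓝 1) := by
      simp only [hy]; exact tendsto_const_nhds
    exact tendsto_nhds_unique h1 h2
  have hr_lim : Filter.Tendsto r Filter.atTop (𝓝 1) := by
    have hlo : Filter.Tendsto (fun k : ℕ => 1 - 1/((k:ℝ)+1)) Filter.atTop (𝓝 1) := by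
      have := (tendsto_one_div_add_atTop_nhds_zero_nat :
        Filter.Tendsto (fun n : ℕ => 1 / ((n : ℝ) + 1)) Filter.atTop (𝓝 0))
      have h := Filter.Tendsto.const_sub (1:ℝ) this
      simpa using h
    exact tendsto_of_tendsto_of_tendsto_of_le_of_le hlo tendsto_const_nhds
      (fun k => (hr1 k).le) hr2
  have hfz : f z = 1 := by
    have h1 : Filter.Tendsto (fun k => f (y k)) Filter.atTop (𝓝 (f z)) :=
      (f.continuous.tendsto z).comp hz
    have h2 : Filter.Tendsto (fun k => f (y k)) Filter.atTop (𝓝 (1:𝕜)) := by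
      simp only [hfy]
      have : Filter.Tendsto (fun k => ((r k : ℝ) : 𝕜)) Filter.atTop (𝓝 ((1:ℝ):𝕜)) :=
        (RCLike.continuous_ofReal.tendsto _).comp hr_lim
      simpa using this
    exact tendsto_nhds_unique h1 h2
  exact ⟨z, hzn, hfz⟩

end aux

/-- Let `X₁, …, X_{N−1}` (here a family over `Fin n` with `n = N−1`) and
`X_N = Y` be Banach spaces with `Y` uniformly convex. If the pair `(X₁×⋯×X_{N−1}, Y*)` has
the property `L_{o,o}` for `(N−1)`-linear maps with values in the dual `Y*`, then the pair
`(X₁×⋯×X_{N−1}×Y, 𝕜)` has the property `L_{o,o}` for `N`-linear forms, an `N`-linear form `A`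
being identified with the `(N−1)`-linear `Y*`-valued map `Ã(x₁,…,x_{N−1})(x_N) = A(x₁,…,x_N)`
(an isometric identification). -/
theorem stmt_12 {𝕜 : Type*} [RCLike 𝕜] {n : ℕ} (X : Fin n → Type*)
    [∀ i, NormedAddCommGroup (X i)] [∀ i, NormedSpace 𝕜 (X i)] [∀ i, CompleteSpace (X i)]
    (Y : Type*) [NormedAddCommGroup Y] [NormedSpace 𝕜 Y] [CompleteSpace Y]
    [UniformConvexSpace Y]
    (hLoo : ∀ ε > (0 : ℝ), ∀ A : ContinuousMultilinearMap 𝕜 X (Y →L[𝕜] 𝕜), ‖A‖ = 1 →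
      ∃ η > (0 : ℝ), ∀ x : (∀ i, X i), (∀ i, ‖x i‖ = 1) → ‖A x‖ > 1 - η →
        ∃ x₀ : (∀ i, X i), (∀ i, ‖x₀ i‖ = 1) ∧ ‖A x₀‖ = 1 ∧ ∀ i, ‖x₀ i - x i‖ < ε) :
    ∀ ε > (0 : ℝ), ∀ A : ContinuousMultilinearMap 𝕜 X (Y →L[𝕜] 𝕜), ‖A‖ = 1 →
      ∃ η > (0 : ℝ), ∀ (x : ∀ i, X i) (y : Y), (∀ i, ‖x i‖ = 1) → ‖y‖ = 1 →
        ‖A x y‖ > 1 - η →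
        ∃ (x₀ : ∀ i, X i) (y₀ : Y), (∀ i, ‖x₀ i‖ = 1) ∧ ‖y₀‖ = 1 ∧ ‖A x₀ y₀‖ = 1 ∧
          (∀ i, ‖x₀ i - x i‖ < ε) ∧ ‖y₀ - y‖ < ε := by
  intro ε hε A hA
  obtain ⟨δ, hδ0, hδ⟩ := exists_forall_sphere_dist_add_le_two_sub Y hε
  set δ' := min δ (1/2) with hδ'def
  have hδ'0 : 0 < δ' := lt_min hδ0 (by norm_num)
  have hδ'δ : δ' ≤ δ := min_le_left _ _
  have hδ'half : δ' ≤ 1/2 := min_le_right _ _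
  set ε₂ := min ε (δ' / (2 * (n + 1))) with hε₂def
  have hε₂0 : 0 < ε₂ := lt_min hε (by positivity)
  obtain ⟨η₁, hη₁0, hη₁⟩ := hLoo ε₂ hε₂0 A hA
  refine ⟨min η₁ (δ' / 2), lt_min hη₁0 (by positivity), ?_⟩
  intro x y hx hy hAxy
  have hAxy_le : ‖A x y‖ ≤ ‖A x‖ := by
    calc ‖A x y‖ ≤ ‖A x‖ * ‖y‖ := (A x).le_opNorm y
    _ = ‖A x‖ := by rw [hy, mul_one]
  have hAx : ‖A x‖ > 1 - η₁ := by
    have := min_le_left η₁ (δ' / 2)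
    linarith
  obtain ⟨x₀, hx₀, hAx₀, hx₀x⟩ := hη₁ x hx hAx
  have hxn : ‖x‖ ≤ 1 := pi_norm_le_iff_of_nonneg zero_le_one |>.2 fun i => (hx i).le
  have hx₀n : ‖x₀‖ ≤ 1 := pi_norm_le_iff_of_nonneg zero_le_one |>.2 fun i => (hx₀ i).le
  have hsub : ‖x₀ - x‖ ≤ ε₂ := by
    refine pi_norm_le_iff_of_nonneg hε₂0.le |>.2 fun i => ?_
    exact (hx₀x i).le
  have hdiff : ‖A x₀ - A x‖ ≤ (n : ℝ) * ε₂ := by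
    have h1 := A.norm_image_sub_le x₀ x
    rw [hA, Fintype.card_fin, one_mul] at h1
    have h2 : max ‖x₀‖ ‖x‖ ^ (n - 1) ≤ 1 :=
      pow_le_one₀ (le_max_of_le_left (norm_nonneg _)) (max_le hx₀n hxn)
    have h2' : (0:ℝ) ≤ max ‖x₀‖ ‖x‖ ^ (n - 1) :=
      pow_nonneg (le_max_of_le_left (norm_nonneg _)) _
    have hnn : (0:ℝ) ≤ (n:ℝ) := Nat.cast_nonneg n
    nlinarith [norm_nonneg (x₀ - x), mul_le_mul_of_nonneg_left hsub hnn,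
      mul_nonneg hnn (norm_nonneg (x₀ - x))]
  have hnε₂ : (n : ℝ) * ε₂ ≤ δ' / 2 := by
    have h1 : ε₂ ≤ δ' / (2 * (n + 1)) := min_le_right _ _
    have h2 : (n : ℝ) * ε₂ ≤ (n : ℝ) * (δ' / (2 * (n + 1))) :=
      mul_le_mul_of_nonneg_left h1 (Nat.cast_nonneg n)
    have h3 : (n : ℝ) * (δ' / (2 * (n + 1))) ≤ δ' / 2 := by
      rw [← mul_div_assoc, div_le_div_iff₀ (by positivity) two_pos]
      nlinarith [hδ'0.le, mul_nonneg (Nat.cast_nonneg (α := ℝ) n) hδ'0.le]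
    linarith
  set f : Y →L[𝕜] 𝕜 := A x₀ with hfdef
  have hfy_gt : 1 - δ' < ‖f y‖ := by
    have h1 : ‖f y - A x y‖ ≤ ‖A x₀ - A x‖ * ‖y‖ := by
      have h : f y - A x y = (A x₀ - A x) y := by simp [hfdef]
      rw [h]; exact (A x₀ - A x).le_opNorm y
    have h2 : ‖A x y‖ - ‖f y‖ ≤ ‖f y - A x y‖ := by
      have h := norm_sub_norm_le (A x y) (f y)
      rw [← norm_neg (A x y - f y), neg_sub] at h
      linarith [h]
    have h3 := min_le_right η₁ (δ' / 2)
    rw [hy, mul_one] at h1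
    linarith
  have hfy_pos : f y ≠ 0 := by
    intro h
    rw [h, norm_zero] at hfy_gt
    linarith
  obtain ⟨z, hzn, hfz⟩ := exists_norm_attain f hAx₀
  set c : 𝕜 := (starRingEnd 𝕜) (f y) / (‖f y‖ : 𝕜) with hc
  have hfyn0 : (‖f y‖ : 𝕜) ≠ 0 := RCLike.ofReal_ne_zero.2 (norm_ne_zero_iff.2 hfy_pos)
  have hcn : ‖c‖ = 1 := by
    rw [hc, norm_div, RCLike.norm_conj, RCLike.norm_ofReal, abs_of_nonneg (norm_nonneg _),
      div_self (norm_ne_zero_iff.2 hfy_pos)]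
  have hc0 : c ≠ 0 := by
    intro h; rw [h, norm_zero] at hcn; norm_num at hcn
  have hwn : ‖c • y‖ = 1 := by rw [norm_smul, hcn, hy, mul_one]
  have hfw : f (c • y) = (‖f y‖ : 𝕜) := by
    rw [map_smul, smul_eq_mul, hc, div_mul_eq_mul_div, RCLike.conj_mul, div_eq_iff hfyn0]
    ring
  have hclose : ‖c • y - z‖ < ε := by
    by_contra hcon
    push_neg at hcon
    have h2 := hδ hwn hzn hcon
    have h3 : ‖f (c • y + z)‖ ≤ ‖c • y + z‖ := by
      calc ‖f (c • y + z)‖ ≤ ‖f‖ * ‖c • y + z‖ := f.le_opNorm _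
      _ = ‖c • y + z‖ := by rw [hAx₀, one_mul]
    have h4 : ‖f (c • y + z)‖ = ‖f y‖ + 1 := by
      rw [map_add, hfw, hfz]
      have h : ((‖f y‖ : 𝕜)) + 1 = (((‖f y‖ + 1 : ℝ)) : 𝕜) := by push_cast; ring
      rw [h, RCLike.norm_ofReal, abs_of_nonneg (by positivity)]
    linarith
  refine ⟨x₀, c⁻¹ • z, hx₀, ?_, ?_, fun i => lt_of_lt_of_le (hx₀x i) (min_le_left _ _), ?_⟩
  · rw [norm_smul, norm_inv, hcn, inv_one, hzn, mul_one]
  · rw [map_smul, smul_eq_mul, hfz, mul_one, norm_inv, hcn, inv_one]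
  · have h : c⁻¹ • z - y = c⁻¹ • (z - c • y) := by
      rw [smul_sub, inv_smul_smul₀ hc0]
    rw [h, norm_smul, norm_inv, hcn, inv_one, one_mul, ← norm_neg, neg_sub]
    exact hclose
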